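/- Let G be a spanning subgraph of K_{m,n} with partite sets X (|X| = m) and Y (|Y| = n) that is P_4-saturated relative to K_{m,n}. If G contains both a star with at least two leaves in X and a star with at least two leaves in Y (or an isolated edge), then G has no isolated vertices, every component of G is a nontrivial star, the number of components equals α'(G), and |E(G)| = m + n − α'(G). -/

import Mathlib

/-- The graph obtained from `G` by adding the edge `uv`. -/
def addEdge {V : Type*} (G : SimpleGraph V) (u v : V) : SimpleGraph V :=
  G ⊔ SimpleGraph.fromEdgeSet {s(u, v)}

/-- `G` contains a path on 4 vertices as a subgraph. -/
def HasP4 {V : Type*} (G : SimpleGraph V) : Prop :=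
  ∃ a b c d : V, a ≠ b ∧ a ≠ c ∧ a ≠ d ∧ b ≠ c ∧ b ≠ d ∧ c ≠ d ∧
    G.Adj a b ∧ G.Adj b c ∧ G.Adj c d

/-- `G` is a spanning subgraph of `K_{m,n}` (on vertex set `X ⊕ Y`) that is
`P_4`-saturated relative to `K_{m,n}`. -/
def P4SatBip {m n : ℕ} (G : SimpleGraph (Fin m ⊕ Fin n)) : Prop :=
  (∀ x y : Fin m, ¬ G.Adj (.inl x) (.inl y)) ∧
  (∀ x y : Fin n, ¬ G.Adj (.inr x) (.inr y)) ∧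
  ¬ HasP4 G ∧
  ∀ (x : Fin m) (y : Fin n), ¬ G.Adj (.inl x) (.inr y) →
    HasP4 (addEdge G (.inl x) (.inr y))

/-- The set `S` induces a star in `G` with some center `x ∈ S`. -/
def IsStarOn {V : Type*} (G : SimpleGraph V) (S : Set V) : Prop :=
  ∃ x ∈ S, ∀ u ∈ S, ∀ v ∈ S, (G.Adj u v ↔ ((u = x ∧ v ≠ x) ∨ (v = x ∧ u ≠ x)))

/-- The matching number of `G`: the maximum number of edges of a matching in `G`. -/
noncomputable def matchingNumber {V : Type*} (G : SimpleGraph V) : ℕ :=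
  sSup {k | ∃ M : G.Subgraph, M.IsMatching ∧ M.edgeSet.ncard = k}

namespace Aux10
variable {V : Type*} {G : SimpleGraph V}

lemma addEdge_adj (u v p q : V) :
    (addEdge G u v).Adj p q ↔ G.Adj p q ∨ (p ≠ q ∧ ((p = u ∧ q = v) ∨ (p = v ∧ q = u))) := by
  simp only [addEdge, SimpleGraph.sup_adj, SimpleGraph.fromEdgeSet_adj, Set.mem_singleton_iff,
    Sym2.eq_iff]
  tauto

lemma addEdge_comm (u v : V) : addEdge G u v = addEdge G v u := by
  unfold addEdge
  rw [Sym2.eq_swap]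

lemma lemA (f : V → Bool) (hf : ∀ a b, G.Adj a b → f a ≠ f b) (hP4 : ¬ HasP4 G)
    {a b c d : V} (h1 : G.Adj a b) (h2 : G.Adj b c) (h3 : G.Adj c d) : a = c ∨ b = d := by
  by_contra h
  push_neg at h
  obtain ⟨hac, hbd⟩ := h
  have fab := hf a b h1
  have fbc := hf b c h2
  have fcd := hf c d h3
  have fac : f a = f c := by
    cases hx : f a <;> cases hy : f b <;> cases hz : f c <;> simp_all
  refine hP4 ⟨a, b, c, d, h1.ne, hac, ?_, ?_, hbd, h3.ne, h1, h2, h3⟩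
  · rintro rfl; exact fcd fac.symm
  · rintro rfl; exact fab fac

/-- if `v` has two distinct neighbors, then every neighbor of `v` has `v` as its sole neighbor -/
lemma center (f : V → Bool) (hf : ∀ a b, G.Adj a b → f a ≠ f b) (hP4 : ¬ HasP4 G)
    {v a b : V} (hva : G.Adj v a) (hvb : G.Adj v b) (hab : a ≠ b)
    {c : V} (hvc : G.Adj v c) {w : V} (hcw : G.Adj c w) : w = v := by
  rcases eq_or_ne c a with rfl | hca
  · rcases lemA f hf hP4 hvb.symm hvc hcw with h | h
    · exact absurd h.symm hab
    · exact h.symm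
  · rcases lemA f hf hP4 hva.symm hvc hcw with h | h
    · exact absurd h.symm hca
    · exact h.symm

lemma lemIso (hP4 : ¬ HasP4 G) {u v : V} (hv : ∀ w, ¬ G.Adj v w)
    (h4 : HasP4 (addEdge G u v)) : ∃ c z, G.Adj u c ∧ G.Adj c z ∧ z ≠ u := by
  obtain ⟨a, b, c, d, hab, hac, had, hbc, hbd, hcd, e1, e2, e3⟩ := h4
  have hv' : ∀ w, ¬ G.Adj w v := fun w h => hv w h.symm
  rw [addEdge_adj] at e1 e2 e3
  rcases e1 with e1 | ⟨-, ⟨hau, hbv⟩ | ⟨hav, hbu⟩⟩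
  · rcases e2 with e2 | ⟨-, ⟨hbu, hcv⟩ | ⟨hbv, hcu⟩⟩
    · rcases e3 with e3 | ⟨-, ⟨hcu, hdv⟩ | ⟨hcv, hdu⟩⟩
      · exact absurd ⟨a, b, c, d, hab, hac, had, hbc, hbd, hcd, e1, e2, e3⟩ hP4
      · subst hcu; exact ⟨b, a, e2.symm, e1.symm, hac⟩
      · subst hcv; exact absurd e2 (hv' b)
    · subst hcv
      rcases e3 with e3 | ⟨-, ⟨hcu, hdv⟩ | ⟨hcv, hdu⟩⟩
      · exact absurd e3 (hv d)
      · exact absurd (hbu.trans hcu.symm) hbc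
      · exact absurd (hbu.trans hdu.symm) hbd
    · subst hbv; exact absurd e1 (hv' a)
  · subst hau hbv
    rcases e2 with e2 | ⟨-, ⟨hbu, hcv⟩ | ⟨hbv, hcu⟩⟩
    · exact absurd e2 (hv c)
    · exact absurd hbu.symm hab
    · exact absurd hcu.symm hac
  · subst hav hbu
    rcases e2 with e2 | ⟨-, ⟨hbu, hcv⟩ | ⟨hbv, hcu⟩⟩
    · rcases e3 with e3 | ⟨-, ⟨hcu, hdv⟩ | ⟨hcv, hdu⟩⟩
      · exact ⟨c, d, e2, e3, fun h => hbd h.symm⟩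
      · exact absurd hcu.symm hbc
      · subst hcv; exact absurd e2 (hv' b)
    · subst hcv
      rcases e3 with e3 | ⟨-, ⟨hcu, hdv⟩ | ⟨hcv, hdu⟩⟩
      · exact absurd e3 (hv d)
      · exact absurd hcu hbc.symm
      · exact absurd hdu.symm hbd
    · exact absurd hbv hab.symm

lemma reach_closed {S : Set V} (hS : ∀ a ∈ S, ∀ b, G.Adj a b → b ∈ S)
    {a u : V} (h : G.Reachable a u) (ha : a ∈ S) : u ∈ S := by
  obtain ⟨p⟩ := h
  induction p with
  | nil => exact ha
  | cons hadj q ih => exact ih (hS _ ha _ hadj)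

/-- every component has a "center" -/
lemma star_comp (f : V → Bool) (hf : ∀ a b, G.Adj a b → f a ≠ f b) (hP4 : ¬ HasP4 G)
    (hni : ∀ v, (G.neighborSet v).Nonempty) (c : G.ConnectedComponent) :
    ∃ x, x ∈ c.supp ∧ (∃ u, G.Adj x u) ∧ (∀ u, G.Adj x u → ∀ w, G.Adj u w → w = x) ∧
      c.supp = {x} ∪ G.neighborSet x := by
  classical
  obtain ⟨v, hv⟩ := c.exists_rep
  obtain ⟨w, hw⟩ := hni v
  rw [SimpleGraph.mem_neighborSet] at hw
  -- choose the center x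
  have key : ∃ x, x ∈ c.supp ∧ (∃ u, G.Adj x u) ∧ (∀ u, G.Adj x u → ∀ w, G.Adj u w → w = x) := by
    by_cases h2 : ∃ w', G.Adj v w' ∧ w' ≠ w
    · obtain ⟨w', hw', hne⟩ := h2
      exact ⟨v, show G.connectedComponentMk v = c from hv, ⟨w, hw⟩,
        fun u hu w2 hw2 => center f hf hP4 hw' hw hne hu hw2⟩
    · push_neg at h2
      by_cases h3 : ∃ z, G.Adj w z ∧ z ≠ v
      · obtain ⟨z, hz, hnz⟩ := h3
        refine ⟨w, ?_, ⟨v, hw.symm⟩, fun u hu w2 hw2 => center f hf hP4 hz hw.symm hnz hu hw2⟩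
        show G.connectedComponentMk w = c
        rw [← hv]
        exact SimpleGraph.ConnectedComponent.connectedComponentMk_eq_of_adj hw.symm
      · push_neg at h3
        refine ⟨v, show G.connectedComponentMk v = c from hv, ⟨w, hw⟩, ?_⟩
        intro u hu w2 hw2
        have : u = w := h2 u hu
        subst this
        exact h3 w2 hw2
  obtain ⟨x, hx, hnbr, hleaf⟩ := key
  refine ⟨x, hx, hnbr, hleaf, ?_⟩
  apply Set.eq_of_subset_of_subset
  · intro u hu
    rw [SimpleGraph.ConnectedComponent.mem_supp_iff] at hu hx
    have hreach : G.Reachable x u := SimpleGraph.ConnectedComponent.exact (hx.trans hu.symm)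
    refine reach_closed (S := {x} ∪ G.neighborSet x) ?_ hreach (Or.inl rfl)
    rintro a (rfl | ha) b hab
    · exact Or.inr hab
    · exact Or.inl (hleaf a ha b hab)
  · rintro u (rfl | hu)
    · exact hx
    · rw [SimpleGraph.ConnectedComponent.mem_supp_iff] at hx ⊢
      rw [← hx]
      exact SimpleGraph.ConnectedComponent.connectedComponentMk_eq_of_adj hu.symm

end Aux10


open SimpleGraph

/-- A `P_4`-saturated subgraph of `K_{m,n}` containing an `X`-star and either a `Y`-star
or an isolated edge has no isolated vertices, all components nontrivial stars,
`α'(G)` components, and exactly `m + n - α'(G)` edges. -/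
theorem stmt10 (m n : ℕ) (G : SimpleGraph (Fin m ⊕ Fin n)) (hsat : P4SatBip G)
    (hX : ∃ (y : Fin n) (x₁ x₂ : Fin m), x₁ ≠ x₂ ∧
      G.Adj (.inr y) (.inl x₁) ∧ G.Adj (.inr y) (.inl x₂))
    (hY : (∃ (x : Fin m) (y₁ y₂ : Fin n), y₁ ≠ y₂ ∧
        G.Adj (.inl x) (.inr y₁) ∧ G.Adj (.inl x) (.inr y₂)) ∨
      (∃ (x : Fin m) (y : Fin n), G.Adj (.inl x) (.inr y) ∧
        (G.neighborSet (.inl x)).ncard = 1 ∧ (G.neighborSet (.inr y)).ncard = 1)) :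
    (∀ v, (G.neighborSet v).Nonempty) ∧
    (∀ c : G.ConnectedComponent, IsStarOn G c.supp ∧ 2 ≤ c.supp.ncard) ∧
    Nat.card G.ConnectedComponent = matchingNumber G ∧
    G.edgeSet.ncard = m + n - matchingNumber G := by
  classical
  obtain ⟨hXX, hYY, hP4, hadd⟩ := hsat
  have hf : ∀ a b : (Fin m ⊕ Fin n), G.Adj a b → a.isLeft ≠ b.isLeft := by
    rintro (a | a) (b | b) h
    · exact absurd h (hXX a b)
    · simp
    · simp
    · exact absurd h (hYY a b)
  set f : (Fin m ⊕ Fin n) → Bool := Sum.isLeft with hfdef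
  -- PART 1 : no isolated vertices
  have hni : ∀ v : (Fin m ⊕ Fin n), (G.neighborSet v).Nonempty := by
    intro v
    by_contra h
    rw [Set.not_nonempty_iff_eq_empty] at h
    have hiso : ∀ w, ¬ G.Adj v w := by
      intro w hw
      have : w ∈ G.neighborSet v := hw
      rw [h] at this
      exact this
    obtain ⟨y0, x1, x2, hx12, hy1, hy2⟩ := hX
    cases v with
    | inl x =>
      -- every y : Fin n has a neighbor with a second neighbor ≠ inr y
      have hall : ∀ y : Fin n, ∃ c z, G.Adj (Sum.inr y) c ∧ G.Adj c z ∧ z ≠ Sum.inr y := by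
        intro y
        have hna : ¬ G.Adj (.inl x) (.inr y) := hiso _
        have h4 := hadd x y hna
        rw [Aux10.addEdge_comm] at h4
        exact Aux10.lemIso hP4 hiso h4
      obtain ⟨c, z, hc, hz, hne⟩ := hall y0
      exact hne (Aux10.center f hf hP4 hy1 hy2 (by simp [hx12]) hc hz)
    | inr y =>
      have hall : ∀ x' : Fin m, ∃ c z, G.Adj (Sum.inl x') c ∧ G.Adj c z ∧ z ≠ Sum.inl x' := by
        intro x'
        have hna : ¬ G.Adj (.inl x') (.inr y) := fun h' => hiso _ h'.symm
        exact Aux10.lemIso hP4 hiso (hadd x' y hna)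
      rcases hY with ⟨x0, y1, y2, hy12, k1, k2⟩ | ⟨x0, y0', hadj, hd1, hd2⟩
      · obtain ⟨c, z, hc, hz, hne⟩ := hall x0
        exact hne (Aux10.center f hf hP4 k1 k2 (by simp [hy12]) hc hz)
      · obtain ⟨c, z, hc, hz, hne⟩ := hall x0
        have hcx : c = Sum.inr y0' := by
          obtain ⟨a, ha⟩ := Set.ncard_eq_one.mp hd1
          have m1 : (Sum.inr y0' : (Fin m ⊕ Fin n)) ∈ G.neighborSet (.inl x0) := hadj
          have m2 : c ∈ G.neighborSet (.inl x0) := hc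
          rw [ha, Set.mem_singleton_iff] at m1 m2
          rw [m2, ← m1]
        subst hcx
        have hzx : z = Sum.inl x0 := by
          obtain ⟨a, ha⟩ := Set.ncard_eq_one.mp hd2
          have m1 : (Sum.inl x0 : (Fin m ⊕ Fin n)) ∈ G.neighborSet (.inr y0') := hadj.symm
          have m2 : z ∈ G.neighborSet (.inr y0') := hz
          rw [ha, Set.mem_singleton_iff] at m1 m2
          rw [m2, ← m1]
        exact hne hzx
  -- centers of components
  choose cent hmem hnbr hleaf hsupp using fun c => Aux10.star_comp f hf hP4 hni c
  choose lf hlf using hnbr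
  have hmk_cent : ∀ c, G.connectedComponentMk (cent c) = c := fun c =>
    (ConnectedComponent.mem_supp_iff _ _).mp (hmem c)
  have centInj : Function.Injective cent := by
    intro c1 c2 h
    rw [← hmk_cent c1, h, hmk_cent c2]
  have hmk_lf : ∀ c, G.connectedComponentMk (lf c) = c := by
    intro c
    have h2 := ConnectedComponent.connectedComponentMk_eq_of_adj (hlf c).symm
    rw [h2, hmk_cent]
  have lfInj : Function.Injective lf := by
    intro c1 c2 h
    rw [← hmk_lf c1, h, hmk_lf c2]
  have cent_ne_lf : ∀ c c', cent c ≠ lf c' := by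
    intro c c' h
    have : c = c' := by rw [← hmk_cent c, h, hmk_lf c']
    subst this
    exact (hlf c).ne h
  -- PART 2
  have part2 : ∀ c : G.ConnectedComponent, IsStarOn G c.supp ∧ 2 ≤ c.supp.ncard := by
    intro c
    constructor
    · refine ⟨cent c, hmem c, ?_⟩
      intro u hu v hv
      rw [hsupp c] at hu hv
      constructor
      · intro huv
        rcases hu with rfl | hu
        · exact Or.inl ⟨rfl, huv.ne'⟩
        · exact Or.inr ⟨hleaf c u hu v huv, (hu.ne' : u ≠ cent c)⟩
      · rintro (⟨rfl, hvne⟩ | ⟨rfl, hune⟩)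
        · rcases hv with rfl | hv
          · exact absurd rfl hvne
          · exact hv
        · rcases hu with rfl | hu
          · exact absurd rfl hune
          · exact hu.symm
    · have h1 : cent c ∈ c.supp := hmem c
      have h2 : lf c ∈ c.supp := by
        rw [ConnectedComponent.mem_supp_iff]
        exact hmk_lf c
      have : ({cent c, lf c} : Set (Fin m ⊕ Fin n)) ⊆ c.supp := by
        rintro w (rfl | rfl)
        · exact h1
        · simp_all
      calc 2 = ({cent c, lf c} : Set (Fin m ⊕ Fin n)).ncard := by
              rw [Set.ncard_pair (fun h => cent_ne_lf c c h)]
        _ ≤ c.supp.ncard := Set.ncard_le_ncard this (Set.toFinite _)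
  -- the maximum matching
  set K := Nat.card G.ConnectedComponent with hK
  let M : G.Subgraph :=
    { verts := {v | ∃ c, v = cent c ∨ v = lf c}
      Adj := fun a b => ∃ c, (a = cent c ∧ b = lf c) ∨ (a = lf c ∧ b = cent c)
      adj_sub := by
        rintro a b ⟨c, ⟨rfl, rfl⟩ | ⟨rfl, rfl⟩⟩
        · exact hlf c
        · exact (hlf c).symm
      edge_vert := by
        rintro a b ⟨c, ⟨rfl, -⟩ | ⟨rfl, -⟩⟩
        · exact ⟨c, Or.inl rfl⟩
        · exact ⟨c, Or.inr rfl⟩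
      symm := by
        constructor
        rintro a b ⟨c, ⟨h1, h2⟩ | ⟨h1, h2⟩⟩
        · exact ⟨c, Or.inr ⟨h2, h1⟩⟩
        · exact ⟨c, Or.inl ⟨h2, h1⟩⟩ }
  have hMadj : ∀ a b, M.Adj a b ↔ ∃ c, (a = cent c ∧ b = lf c) ∨ (a = lf c ∧ b = cent c) :=
    fun a b => Iff.rfl
  have hM : M.IsMatching := by
    rintro v ⟨c, rfl | rfl⟩
    · refine ⟨lf c, ⟨c, Or.inl ⟨rfl, rfl⟩⟩, ?_⟩
      rintro y ⟨c', ⟨h1, h2⟩ | ⟨h1, h2⟩⟩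
      · rw [h2, centInj h1]
      · exact absurd h1 (cent_ne_lf c c')
    · refine ⟨cent c, ⟨c, Or.inr ⟨rfl, rfl⟩⟩, ?_⟩
      rintro y ⟨c', ⟨h1, h2⟩ | ⟨h1, h2⟩⟩
      · exact absurd h1.symm (cent_ne_lf c' c)
      · rw [h2, lfInj h1]
  have hMcard : M.edgeSet.ncard = K := by
    have hrange : M.edgeSet = Set.range (fun c => s(cent c, lf c)) := by
      ext e
      induction e using Sym2.ind with
      | _ a b =>
        simp only [Subgraph.mem_edgeSet, Set.mem_range]
        constructor
        · rintro ⟨c, ⟨rfl, rfl⟩ | ⟨rfl, rfl⟩⟩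
          · exact ⟨c, rfl⟩
          · exact ⟨c, Sym2.eq_swap⟩
        · rintro ⟨c, hc⟩
          rw [Sym2.eq_iff] at hc
          rcases hc with ⟨h1, h2⟩ | ⟨h1, h2⟩
          · exact ⟨c, Or.inl ⟨h1.symm, h2.symm⟩⟩
          · exact ⟨c, Or.inr ⟨h2.symm, h1.symm⟩⟩
    have hinjF : Function.Injective (fun c => (s(cent c, lf c) : Sym2 (Fin m ⊕ Fin n))) := by
      intro c1 c2 h
      simp only [Sym2.eq_iff] at h
      rcases h with ⟨h1, -⟩ | ⟨h1, -⟩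
      · exact centInj h1
      · exact absurd h1 (cent_ne_lf c1 c2)
    rw [hrange, ← Nat.card_coe_set_eq, Nat.card_range_of_injective hinjF]
  -- every G-edge contains the center of its component
  have key : ∀ a b : (Fin m ⊕ Fin n), G.Adj a b →
      a = cent (G.connectedComponentMk a) ∨ b = cent (G.connectedComponentMk a) := by
    intro a b hab
    have ha : a ∈ (G.connectedComponentMk a).supp := rfl
    rw [hsupp _] at ha
    rcases ha with ha | ha
    · exact Or.inl ha
    · exact Or.inr (hleaf _ a ha b hab)
  -- upper bound on matchings
  have hub : ∀ k ∈ {k | ∃ M : G.Subgraph, M.IsMatching ∧ M.edgeSet.ncard = k}, k ≤ K := by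
    rintro k ⟨M', hM', rfl⟩
    have hchoice : ∀ e : M'.edgeSet, ∃ p : (Fin m ⊕ Fin n) × (Fin m ⊕ Fin n), M'.Adj p.1 p.2 ∧ (e : Sym2 (Fin m ⊕ Fin n)) = s(p.1, p.2) := by
      rintro ⟨e, he⟩
      revert he
      induction e using Sym2.ind with
      | _ a b => exact fun he => ⟨(a, b), Subgraph.mem_edgeSet.mp he, rfl⟩
    choose p hpadj hpe using hchoice
    have hedge_cent : ∀ e : M'.edgeSet,
        ∃ t, M'.Adj (cent (G.connectedComponentMk (p e).1)) t ∧
          (e : Sym2 (Fin m ⊕ Fin n)) = s(cent (G.connectedComponentMk (p e).1), t) := by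
      intro e
      rcases key (p e).1 (p e).2 (M'.adj_sub (hpadj e)) with hc | hc
      · exact ⟨(p e).2, hc ▸ hpadj e, by rw [hpe e, ← hc]⟩
      · refine ⟨(p e).1, ?_, ?_⟩
        · exact hc ▸ (hpadj e).symm
        · rw [hpe e, ← hc, Sym2.eq_swap]
    have hinj : Function.Injective
        (fun e : M'.edgeSet => G.connectedComponentMk (p e).1) := by
      intro e1 e2 h
      replace h : G.connectedComponentMk (p e1).1 = G.connectedComponentMk (p e2).1 := h
      obtain ⟨t1, ht1, he1⟩ := hedge_cent e1
      obtain ⟨t2, ht2, he2⟩ := hedge_cent e2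
      rw [h] at ht1 he1
      set x := cent (G.connectedComponentMk (p e2).1) with hx
      have hxv : x ∈ M'.verts := M'.edge_vert ht1
      obtain ⟨w, -, hwu⟩ := hM' hxv
      have : t1 = t2 := (hwu t1 ht1).trans (hwu t2 ht2).symm
      apply Subtype.ext
      rw [he1, he2, this]
    have : Nat.card M'.edgeSet ≤ K := Nat.card_le_card_of_injective _ hinj
    rwa [Nat.card_coe_set_eq] at this
  have hKmem : K ∈ {k | ∃ M : G.Subgraph, M.IsMatching ∧ M.edgeSet.ncard = k} := ⟨M, hM, hMcard⟩
  have hmatch : matchingNumber G = K := by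
    unfold matchingNumber
    exact le_antisymm (csSup_le ⟨K, hKmem⟩ hub) (le_csSup ⟨K, hub⟩ hKmem)
  -- PART 4 : edge count
  have hcardV : Nat.card (Fin m ⊕ Fin n) = m + n := by simp [Nat.card_eq_fintype_card, Fintype.card_sum]
  set S : Set (Fin m ⊕ Fin n) := {v | v ≠ cent (G.connectedComponentMk v)} with hS
  have hcompl : Sᶜ = Set.range cent := by
    ext v
    simp only [hS, Set.mem_compl_iff, Set.mem_setOf_eq, not_not, Set.mem_range]
    constructor
    · intro h
      exact ⟨G.connectedComponentMk v, h.symm⟩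
    · rintro ⟨c, rfl⟩
      rw [hmk_cent c]
  have hcardCompl : Sᶜ.ncard = K := by
    rw [hcompl, ← Nat.card_coe_set_eq, Nat.card_range_of_injective centInj]
  have hcardS : S.ncard = m + n - K := by
    have := Set.ncard_add_ncard_compl S
    rw [hcardCompl, hcardV] at this
    omega
  have hKle : K ≤ m + n := by
    have := Set.ncard_add_ncard_compl S
    rw [hcardCompl, hcardV] at this
    omega
  -- bijection between S and the edge set
  have hSadj : ∀ v ∈ S, G.Adj (cent (G.connectedComponentMk v)) v := by
    intro v hv
    have hmemv : v ∈ (G.connectedComponentMk v).supp := rfl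
    rw [hsupp _] at hmemv
    rcases hmemv with h | h
    · exact absurd h hv
    · exact h
  let g : S → G.edgeSet := fun v =>
    ⟨s(cent (G.connectedComponentMk v.1), v.1), hSadj v.1 v.2⟩
  have hginj : Function.Injective g := by
    rintro ⟨v1, h1⟩ ⟨v2, h2⟩ h
    simp only [g, Subtype.mk.injEq, Sym2.eq_iff] at h
    replace h := Sym2.eq_iff.mp (congrArg Subtype.val h)
    rcases h with ⟨-, h⟩ | ⟨hc1, hc2⟩
    · exact Subtype.ext h
    · exfalso
      apply h2
      rw [← hc1, hmk_cent, hc1]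
  have hgsurj : Function.Surjective g := by
    rintro ⟨e, he⟩
    revert he
    induction e using Sym2.ind with
    | _ a b =>
      intro he
      rw [mem_edgeSet] at he
      have hba : G.connectedComponentMk b = G.connectedComponentMk a :=
        ConnectedComponent.connectedComponentMk_eq_of_adj he.symm
      rcases key a b he with hc | hc
      · have hbS : b ∈ S := by
          simp only [hS, Set.mem_setOf_eq, hba, ← hc]
          exact he.ne'
        refine ⟨⟨b, hbS⟩, ?_⟩
        apply Subtype.ext
        show s(cent (G.connectedComponentMk b), b) = s(a, b)
        rw [hba, ← hc]
      · have haS : a ∈ S := by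
          simp only [hS, Set.mem_setOf_eq, ← hc]
          exact he.ne
        refine ⟨⟨a, haS⟩, ?_⟩
        apply Subtype.ext
        show s(cent (G.connectedComponentMk a), a) = s(a, b)
        rw [← hc, Sym2.eq_swap]
  have hedgecard : G.edgeSet.ncard = m + n - K := by
    rw [← Nat.card_coe_set_eq, ← Nat.card_eq_of_bijective g ⟨hginj, hgsurj⟩,
      Nat.card_coe_set_eq, hcardS]
  exact ⟨hni, part2, by rw [hmatch], by rw [hmatch]; exact hedgecard⟩
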